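/- (Lemma on j unrestricted k-mers, with top restriction.) Let t ≥ 0 and j ≥ 0 be integers with s = t + 2 + j, and for an integer m' ≥ 1 let A(m') denote the number of configurations of s k-mers on the n × m' lattice in which row jk'+1 is bottom-anchored for every j' ∈ {0, …, t} (here k' = k, i.e., the anchored rows are 1, k+1, …, tk+1) and at least one placement occupies a site in row m'. Then for every integer m ≥ ks + 1, ∑_{i=0}^{j+1} (−1)^i · C(j+1, i) · A(m−i) = 0. -/

import Mathlib

/-- The set of sites occupied by a horizontal `k`-mer starting at column `c`, row `r`. -/
def horizKmer (k c r : ℕ) : Finset (ℕ × ℕ) :=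
  (Finset.range k).image fun i => (c + i, r)

/-- The set of sites occupied by a vertical `k`-mer at column `c` starting at row `r`. -/
def vertKmer (k c r : ℕ) : Finset (ℕ × ℕ) :=
  (Finset.range k).image fun i => (c, r + i)

/-- A `k`-mer placement on the `n × m` lattice with free boundary conditions,
identified with its set of occupied sites `(c, r)`, `1 ≤ c ≤ n`, `1 ≤ r ≤ m`. -/
def IsFreePlacement (k n m : ℕ) (p : Finset (ℕ × ℕ)) : Prop :=
  (∃ c r, 1 ≤ c ∧ c + k ≤ n + 1 ∧ 1 ≤ r ∧ r ≤ m ∧ p = horizKmer k c r) ∨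
  (∃ c r, 1 ≤ c ∧ c ≤ n ∧ 1 ≤ r ∧ r + k ≤ m + 1 ∧ p = vertKmer k c r)

/-- A configuration of `s` `k`-mers on the `n × m` lattice with free boundary
conditions: a set of `s` placements whose occupied site sets are pairwise disjoint. -/
def IsFreeConfig (k n m s : ℕ) (C : Finset (Finset (ℕ × ℕ))) : Prop :=
  C.card = s ∧ (∀ p ∈ C, IsFreePlacement k n m p) ∧
    (C : Set (Finset (ℕ × ℕ))).Pairwise fun p q => Disjoint p q

/-- `a(m, s)`: the number of configurations of `s` `k`-mers on the `n × m`
lattice with free boundary conditions. -/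
noncomputable def freeCount (k n m s : ℕ) : ℕ :=
  {C | IsFreeConfig k n m s C}.ncard

/-- A placement touches row `r` from above: it occupies a site in row `r`
and all its sites are in rows `≥ r` (i.e. it is horizontal in row `r`, or
vertical occupying rows `r, r+1, …, r+k-1`). -/
def TouchesFromAbove (p : Finset (ℕ × ℕ)) (r : ℕ) : Prop :=
  (∃ q ∈ p, q.2 = r) ∧ ∀ q ∈ p, r ≤ q.2

/-- A placement overhangs row `r`: it occupies a site in row `r` and also a site
in a row strictly below `r` (hence it is vertical with lowest occupied row `< r`). -/
def Overhangs (p : Finset (ℕ × ℕ)) (r : ℕ) : Prop :=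
  (∃ q ∈ p, q.2 = r) ∧ ∃ q ∈ p, q.2 < r

/-- In a configuration, row `r` is bottom-anchored: at least one placement occupies
a site in row `r`, and every placement occupying a site in row `r` touches row `r`
from above. -/
def BottomAnchored (C : Finset (Finset (ℕ × ℕ))) (r : ℕ) : Prop :=
  (∃ p ∈ C, ∃ q ∈ p, q.2 = r) ∧
    ∀ p ∈ C, (∃ q ∈ p, q.2 = r) → TouchesFromAbove p r

/-- In a configuration, row `r` is barred: at least one placement overhangs row `r`. -/
def Barred (C : Finset (Finset (ℕ × ℕ))) (r : ℕ) : Prop :=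
  ∃ p ∈ C, Overhangs p r

namespace KmerSharp
open Finset
open scoped Classical

abbrev Cfg := Finset (Finset (ℕ × ℕ))

/-- rows occupied by a placement -/
def rowsOf (p : Finset (ℕ × ℕ)) : Finset ℕ := p.image Prod.snd

lemma mem_rowsOf {p : Finset (ℕ × ℕ)} {a : ℕ} : a ∈ rowsOf p ↔ ∃ q ∈ p, q.2 = a := by
  simp [rowsOf]

lemma mem_horizKmer {k c r : ℕ} {q : ℕ × ℕ} :
    q ∈ horizKmer k c r ↔ ∃ i < k, q = (c + i, r) := by
  simp [horizKmer, eq_comm]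

lemma mem_vertKmer {k c r : ℕ} {q : ℕ × ℕ} :
    q ∈ vertKmer k c r ↔ ∃ i < k, q = (c, r + i) := by
  simp [vertKmer, eq_comm]

lemma rowsOf_horiz {k c r : ℕ} (hk : 1 ≤ k) : rowsOf (horizKmer k c r) = {r} := by
  ext a
  simp only [rowsOf, horizKmer, Finset.mem_image, Finset.mem_singleton, Finset.mem_range]
  constructor
  · rintro ⟨q, ⟨i, hi, rfl⟩, rfl⟩; rfl
  · rintro rfl; exact ⟨(c, a), ⟨0, by omega, rfl⟩, rfl⟩

lemma mem_rowsOf_vert {k c r a : ℕ} :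
    a ∈ rowsOf (vertKmer k c r) ↔ r ≤ a ∧ a < r + k := by
  simp only [rowsOf, vertKmer, Finset.mem_image, Finset.mem_range]
  constructor
  · rintro ⟨q, ⟨i, hi, rfl⟩, rfl⟩; omega
  · rintro ⟨h1, h2⟩; exact ⟨(c, a), ⟨a - r, by omega, by simp; omega⟩, rfl⟩

section Placement

variable {k n M : ℕ} {p : Finset (ℕ × ℕ)}

lemma rows_nonempty (hk : 1 ≤ k) (hp : IsFreePlacement k n M p) : (rowsOf p).Nonempty := by
  rcases hp with ⟨c, r, _, _, _, _, rfl⟩ | ⟨c, r, _, _, _, _, rfl⟩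
  · rw [rowsOf_horiz hk]; exact ⟨r, by simp⟩
  · exact ⟨r, mem_rowsOf_vert.2 (by omega)⟩

lemma rows_interval (hk : 1 ≤ k) (hp : IsFreePlacement k n M p) {a b x : ℕ}
    (ha : a ∈ rowsOf p) (hb : b ∈ rowsOf p) (hax : a ≤ x) (hxb : x ≤ b) : x ∈ rowsOf p := by
  rcases hp with ⟨c, r, _, _, _, _, rfl⟩ | ⟨c, r, _, _, _, _, rfl⟩
  · rw [rowsOf_horiz hk] at *
    simp at ha hb ⊢; omega
  · rw [mem_rowsOf_vert] at *
    omega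

lemma rows_span (hk : 1 ≤ k) (hp : IsFreePlacement k n M p) {a b : ℕ}
    (ha : a ∈ rowsOf p) (hb : b ∈ rowsOf p) : b < a + k := by
  rcases hp with ⟨c, r, _, _, _, _, rfl⟩ | ⟨c, r, _, _, _, _, rfl⟩
  · rw [rowsOf_horiz hk] at *; simp at ha hb; omega
  · rw [mem_rowsOf_vert] at *; omega

lemma card_rowsOf_le (hk : 1 ≤ k) (hp : IsFreePlacement k n M p) : (rowsOf p).card ≤ k := by
  rcases hp with ⟨c, r, _, _, _, _, rfl⟩ | ⟨c, r, _, _, _, _, rfl⟩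
  · rw [rowsOf_horiz hk]; simpa using hk
  · calc (rowsOf (vertKmer k c r)).card ≤ (vertKmer k c r).card := Finset.card_image_le
      _ ≤ k := by unfold vertKmer; exact (Finset.card_image_le).trans (by simp)

/-- sites of a placement lie in the box. -/
lemma placement_sub_box (hk : 1 ≤ k) (hp : IsFreePlacement k n M p) :
    p ⊆ Finset.Icc 1 n ×ˢ Finset.Icc 1 M := by
  rcases hp with ⟨c, r, h1, h2, h3, h4, rfl⟩ | ⟨c, r, h1, h2, h3, h4, rfl⟩
  · intro q hq; rw [mem_horizKmer] at hq
    obtain ⟨i, hi, rfl⟩ := hq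
    simp only [Finset.mem_product, Finset.mem_Icc]; omega
  · intro q hq; rw [mem_vertKmer] at hq
    obtain ⟨i, hi, rfl⟩ := hq
    simp only [Finset.mem_product, Finset.mem_Icc]; omega

/-- rows of a placement are bounded by M -/
lemma rows_le (hk : 1 ≤ k) (hp : IsFreePlacement k n M p) {a : ℕ} (ha : a ∈ rowsOf p) :
    1 ≤ a ∧ a ≤ M := by
  rw [mem_rowsOf] at ha
  obtain ⟨q, hq, rfl⟩ := ha
  have := placement_sub_box hk hp hq
  simp only [Finset.mem_product, Finset.mem_Icc] at this
  omega

end Placement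

section Config

def OccRow (C : Cfg) (a : ℕ) : Prop := ∃ p ∈ C, a ∈ rowsOf p

def CrossAt (C : Cfg) (a : ℕ) : Prop := ∃ p ∈ C, a ∈ rowsOf p ∧ a + 1 ∈ rowsOf p

noncomputable def cutRows (C : Cfg) (L M : ℕ) : Finset ℕ :=
  (Finset.Ico L M).filter (fun r => OccRow C r ∧ ¬ CrossAt C r)

noncomputable def idx (C : Cfg) (L M r : ℕ) : ℕ :=
  ((cutRows C L M).filter (fun x => x < r)).card

noncomputable def upper (C : Cfg) (L : ℕ) : Cfg :=
  C.filter (fun p => ∀ a ∈ rowsOf p, L < a)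

lemma mem_cutRows {C : Cfg} {L M r : ℕ} :
    r ∈ cutRows C L M ↔ (L ≤ r ∧ r < M) ∧ OccRow C r ∧ ¬ CrossAt C r := by
  simp [cutRows, Finset.mem_filter, Finset.mem_Ico, and_assoc]

lemma idx_lt_of_mem {C : Cfg} {L M r : ℕ} (h : r ∈ cutRows C L M) :
    idx C L M r < (cutRows C L M).card := by
  apply Finset.card_lt_card
  constructor
  · exact Finset.filter_subset _ _
  · intro hsub
    have := hsub h
    simp at this

lemma idx_strict {C : Cfg} {L M r r' : ℕ} (h : r ∈ cutRows C L M) (hlt : r < r') :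
    idx C L M r < idx C L M r' := by
  apply Finset.card_lt_card
  constructor
  · intro x hx
    simp only [Finset.mem_filter] at hx ⊢
    exact ⟨hx.1, by omega⟩
  · intro hsub
    have := hsub (Finset.mem_filter.2 ⟨h, hlt⟩)
    simp only [Finset.mem_filter] at this
    omega

lemma idx_injOn {C : Cfg} {L M : ℕ} :
    Set.InjOn (idx C L M) (cutRows C L M) := by
  intro r hr r' hr' h
  by_contra hne
  rcases Nat.lt_or_ge r r' with hlt | hge
  · exact absurd h (Nat.ne_of_lt (idx_strict hr hlt))
  · have hlt : r' < r := by omega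
    exact absurd h.symm (Nat.ne_of_lt (idx_strict hr' hlt))

variable {k n M s t : ℕ} {C : Cfg}

lemma anchor_rows_between (hk : 1 ≤ k)
    (hanch : ∀ j' ≤ t, BottomAnchored C (j' * k + 1))
    (hC : IsFreeConfig k n M s C)
    {j' : ℕ} (hj' : j' ≤ t) {p : Finset (ℕ × ℕ)} (hp : p ∈ C)
    (hrow : j' * k + 1 ∈ rowsOf p) {a : ℕ} (ha : a ∈ rowsOf p) :
    j' * k + 1 ≤ a ∧ a < j' * k + 1 + k := by
  have htouch := (hanch j' hj').2 p hp (mem_rowsOf.1 hrow)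
  constructor
  · rw [mem_rowsOf] at ha
    obtain ⟨q, hq, rfl⟩ := ha
    exact htouch.2 q hq
  · exact rows_span hk (hC.2.1 p hp) hrow ha

/-- the anchor row `t*k+1` is occupied -/
lemma L_occupied (hanch : ∀ j' ≤ t, BottomAnchored C (j' * k + 1)) :
    OccRow C (t * k + 1) := by
  obtain ⟨p, hp, q, hq, hq2⟩ := (hanch t le_rfl).1
  exact ⟨p, hp, mem_rowsOf.2 ⟨q, hq, hq2⟩⟩

/-- there are at least `t+1` placements that are not entirely above `t*k+1` -/
lemma upper_card_bound (hk : 1 ≤ k)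
    (hC : IsFreeConfig k n M s C)
    (hanch : ∀ j' ≤ t, BottomAnchored C (j' * k + 1)) :
    (upper C (t * k + 1)).card + (t + 1) ≤ s := by
  classical
  set f : ℕ → Finset (ℕ × ℕ) := fun j' =>
    if h : j' ≤ t then Classical.choose (hanch j' h).1 else ∅ with hf
  have hfspec : ∀ j' ≤ t, f j' ∈ C ∧ (j' * k + 1) ∈ rowsOf (f j') := by
    intro j' h
    obtain ⟨hmem, q, hq, hq2⟩ := Classical.choose_spec (hanch j' h).1
    constructor
    · simp only [hf, dif_pos h]; exact hmem
    · simp only [hf, dif_pos h]; exact mem_rowsOf.2 ⟨q, hq, hq2⟩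
  have hrange : ∀ j' ≤ t, f j' ∈ C \ upper C (t * k + 1) := by
    intro j' h
    obtain ⟨hmem, hrow⟩ := hfspec j' h
    rw [Finset.mem_sdiff]
    refine ⟨hmem, ?_⟩
    simp only [upper, Finset.mem_filter]
    rintro ⟨-, hall⟩
    have h1 := hall _ hrow
    have h2 : j' * k ≤ t * k := Nat.mul_le_mul_right k h
    omega
  have key : ∀ a b : ℕ, a ≤ t → b ≤ t → a < b → f a ≠ f b := by
    intro a b hat hbt hlt hab
    obtain ⟨haC, harow⟩ := hfspec a hat
    obtain ⟨hbC, hbrow⟩ := hfspec b hbt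
    rw [hab] at harow
    have hin := anchor_rows_between hk hanch hC hbt hbC hbrow (a := a * k + 1) harow
    have hba : a * k + k ≤ b * k := by
      have h3 : (a + 1) * k ≤ b * k := Nat.mul_le_mul_right k (by omega)
      have h4 : (a + 1) * k = a * k + k := by ring
      omega
    omega
  have hinj : Set.InjOn f (Finset.range (t + 1)) := by
    intro a ha b hb hab
    simp only [Finset.coe_range, Set.mem_Iio] at ha hb
    by_contra hne
    rcases Nat.lt_or_ge a b with hlt | hge
    · exact key a b (by omega) (by omega) hlt hab
    · exact key b a (by omega) (by omega) (by omega) hab.symm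
  have hcard : t + 1 ≤ (C \ upper C (t * k + 1)).card := by
    have := Finset.card_le_card_of_injOn f
      (fun a ha => hrange a (by simp only [Finset.mem_coe, Finset.mem_range] at ha; omega)) hinj
    simpa using this
  have hsub : upper C (t * k + 1) ⊆ C := Finset.filter_subset _ _
  have hsd := Finset.card_sdiff_add_card_eq_card hsub
  have hCs : C.card = s := hC.1
  omega

/-- the number of cut rows is at most the number of placements entirely above `t*k+1` -/
lemma cut_card_le_upper (hk : 1 ≤ k)
    (hC : IsFreeConfig k n M s C)
    (htop : OccRow C M) :
    (cutRows C (t * k + 1) M).card ≤ (upper C (t * k + 1)).card := by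
  classical
  have hex : ∀ r ∈ cutRows C (t * k + 1) M,
      ∃ p ∈ C, (∃ a ∈ rowsOf p, r < a ∧ ∀ b, r < b → OccRow C b → a ≤ b) ∧
        ∀ a ∈ rowsOf p, r < a := by
    intro r hr
    rw [mem_cutRows] at hr
    obtain ⟨⟨hLr, hrM⟩, hocc, hncross⟩ := hr
    set S : Finset ℕ := (Finset.Ioc r M).filter (fun a => OccRow C a) with hS
    have hSne : S.Nonempty := by
      refine ⟨M, ?_⟩
      simp only [hS, Finset.mem_filter, Finset.mem_Ioc]
      exact ⟨⟨hrM, le_rfl⟩, htop⟩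
    set a0 := S.min' hSne with ha0
    have ha0S : a0 ∈ S := Finset.min'_mem _ _
    simp only [hS, Finset.mem_filter, Finset.mem_Ioc] at ha0S
    obtain ⟨⟨hra0, ha0M⟩, p, hp, hpa0⟩ := ha0S
    have hmin : ∀ b, r < b → OccRow C b → a0 ≤ b := by
      intro b hrb hbocc
      rcases Nat.lt_or_ge M b with hMb | hbM
      · omega
      · apply Finset.min'_le
        simp only [hS, Finset.mem_filter, Finset.mem_Ioc]
        exact ⟨⟨hrb, hbM⟩, hbocc⟩
    refine ⟨p, hp, ⟨a0, hpa0, hra0, hmin⟩, ?_⟩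
    intro a ha
    by_contra hle
    push_neg at hle
    have hrrow : r ∈ rowsOf p := rows_interval hk (hC.2.1 p hp) ha hpa0 hle (by omega)
    have hr1row : r + 1 ∈ rowsOf p := by
      rcases Nat.lt_or_ge (r+1) a0 with hlt | hge
      · exact rows_interval hk (hC.2.1 p hp) ha hpa0 (by omega) (by omega)
      · have heq : a0 = r + 1 := by omega
        rw [← heq]; exact hpa0
    exact hncross ⟨p, hp, hrrow, hr1row⟩
  set g : ℕ → Finset (ℕ × ℕ) := fun r =>
    if h : r ∈ cutRows C (t * k + 1) M then Classical.choose (hex r h) else ∅ with hg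
  have hgspec : ∀ r ∈ cutRows C (t * k + 1) M,
      g r ∈ C ∧ (∃ a ∈ rowsOf (g r), r < a ∧ ∀ b, r < b → OccRow C b → a ≤ b) ∧
        ∀ a ∈ rowsOf (g r), r < a := by
    intro r h
    have := Classical.choose_spec (hex r h)
    simpa only [hg, dif_pos h] using this
  apply Finset.card_le_card_of_injOn g
  · intro r hr
    obtain ⟨hmem, -, hall⟩ := hgspec r hr
    simp only [upper, Finset.mem_coe, Finset.mem_filter]
    refine ⟨hmem, fun b hb => ?_⟩
    have h1 := hall b hb
    rw [Finset.mem_coe, mem_cutRows] at hr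
    omega
  · have key : ∀ r r', r ∈ cutRows C (t * k + 1) M → r' ∈ cutRows C (t * k + 1) M →
        r < r' → g r ≠ g r' := by
      intro r r' hr hr' hlt heq
      obtain ⟨hmem, ⟨a, ha, hra, hmin⟩, hall⟩ := hgspec r hr
      obtain ⟨hmem', -, hall'⟩ := hgspec r' hr'
      have hocc' : OccRow C r' := (mem_cutRows.1 hr').2.1
      have har' : a ≤ r' := hmin r' hlt hocc'
      rw [heq] at ha
      have := hall' a ha
      omega
    intro r hr r' hr' heq
    simp only [Finset.mem_coe] at hr hr'
    by_contra hne
    rcases Nat.lt_or_ge r r' with hlt | hge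
    · exact key r r' hr hr' hlt heq
    · exact key r' r hr' hr (by omega) heq.symm

/-- crossing rows within a single placement -/
noncomputable def crossWin (p : Finset (ℕ × ℕ)) : Finset ℕ :=
  (rowsOf p).filter (fun a => a + 1 ∈ rowsOf p)

lemma crossWin_card_le {k n M : ℕ} {p : Finset (ℕ × ℕ)} (hk : 1 ≤ k)
    (hp : IsFreePlacement k n M p) : (crossWin p).card + 1 ≤ k := by
  have hne := rows_nonempty hk hp
  have hsub : crossWin p ⊆ (rowsOf p).erase ((rowsOf p).max' hne) := by
    intro a ha
    simp only [crossWin, Finset.mem_filter] at ha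
    obtain ⟨ha1, ha2⟩ := ha
    rw [Finset.mem_erase]
    refine ⟨?_, ha1⟩
    intro heq
    have := Finset.le_max' _ _ ha2
    omega
  have h1 := Finset.card_le_card hsub
  have h2 : ((rowsOf p).erase ((rowsOf p).max' hne)).card = (rowsOf p).card - 1 :=
    Finset.card_erase_of_mem (Finset.max'_mem _ _)
  have h3 := card_rowsOf_le hk hp
  have h4 : 1 ≤ (rowsOf p).card := Finset.card_pos.2 hne
  omega

/-- If every row from `t*k+1` up to `M` is occupied, the height `M` is bounded. -/
lemma height_bound {k n M s t : ℕ} {C : Cfg} (hk : 1 ≤ k)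
    (hC : IsFreeConfig k n M s C)
    (hanch : ∀ j' ≤ t, BottomAnchored C (j' * k + 1))
    (hLM : t * k + 1 ≤ M)
    (hfull : ∀ r, t * k + 1 ≤ r → r < M → OccRow C r) :
    M ≤ t * k + 1 + (cutRows C (t * k + 1) M).card
      + (k - 1) * ((upper C (t * k + 1)).card + 1) := by
  classical
  set L := t * k + 1 with hL
  set crossSet : Finset ℕ := (Finset.Ico L M).filter (fun r => CrossAt C r) with hcs
  have hsplit : Finset.Ico L M ⊆ cutRows C L M ∪ crossSet := by
    intro r hr
    rw [Finset.mem_Ico] at hr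
    rcases Classical.em (CrossAt C r) with hcr | hncr
    · exact Finset.mem_union_right _ (Finset.mem_filter.2 ⟨Finset.mem_Ico.2 hr, hcr⟩)
    · exact Finset.mem_union_left _ (mem_cutRows.2 ⟨hr, hfull r hr.1 hr.2, hncr⟩)
  have hcross_sub : crossSet ⊆ Finset.Ico L (L + (k - 1)) ∪
      (upper C L).biUnion (fun p => crossWin p) := by
    intro r hr
    simp only [hcs, Finset.mem_filter, Finset.mem_Ico] at hr
    obtain ⟨⟨hLr, hrM⟩, p, hp, hrp, hr1p⟩ := hr
    rcases Classical.em (∀ a ∈ rowsOf p, L < a) with hup | hnup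
    · apply Finset.mem_union_right
      rw [Finset.mem_biUnion]
      refine ⟨p, ?_, ?_⟩
      · simp only [upper, Finset.mem_filter]; exact ⟨hp, hup⟩
      · simp only [crossWin, Finset.mem_filter]; exact ⟨hrp, hr1p⟩
    · apply Finset.mem_union_left
      push_neg at hnup
      obtain ⟨a, ha, haL⟩ := hnup
      have hLrow : L ∈ rowsOf p := rows_interval hk (hC.2.1 p hp) ha hr1p haL (by omega)
      have := anchor_rows_between hk hanch hC (le_refl t) hp (by rw [← hL] at *; exact hLrow)
        (a := r + 1) hr1p
      rw [Finset.mem_Ico]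
      omega
  have hcross_card : crossSet.card ≤ (k - 1) * ((upper C L).card + 1) := by
    have h1 := Finset.card_le_card hcross_sub
    have h2 := Finset.card_union_le (Finset.Ico L (L + (k - 1)))
      ((upper C L).biUnion (fun p => crossWin p))
    have h3 : ((upper C L).biUnion (fun p => crossWin p)).card ≤
        (upper C L).card * (k - 1) := by
      apply le_trans (Finset.card_biUnion_le)
      apply le_trans (Finset.sum_le_sum (fun p hp => ?_))
      · rw [Finset.sum_const, smul_eq_mul]
      · show (crossWin p).card ≤ k - 1
        have hpC : p ∈ C := Finset.mem_of_mem_filter _ hp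
        have := crossWin_card_le hk (hC.2.1 p hpC)
        omega
    have h4 : (Finset.Ico L (L + (k - 1))).card = k - 1 := by
      rw [Nat.card_Ico]; omega
    have h5 : (k - 1) * ((upper C L).card + 1) = (k - 1) + (upper C L).card * (k-1) := by ring
    omega
  have hIco : (Finset.Ico L M).card = M - L := Nat.card_Ico _ _
  have hmain := Finset.card_le_card hsplit
  have hu := Finset.card_union_le (cutRows C L M) crossSet
  omega

/-- Main counting lemma: the active set is nonempty for every object. -/
lemma active_nonempty {k n M s t j m : ℕ} {C : Cfg} {T : Finset ℕ} (hk : 2 ≤ k)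
    (hC : IsFreeConfig k n M s C)
    (hanch : ∀ j' ≤ t, BottomAnchored C (j' * k + 1))
    (htop : OccRow C M)
    (hT : T ⊆ Finset.range (j + 1))
    (hMm : M + T.card = m)
    (hm : k * s + 1 ≤ m)
    (hsj : s = t + 2 + j) :
    ((cutRows C (t * k + 1) M).filter
      (fun r => idx C (t * k + 1) M r ∈ T ∨ ¬ OccRow C (r + 1))).Nonempty := by
  classical
  set L := t * k + 1 with hL
  by_contra hne
  rw [Finset.not_nonempty_iff_eq_empty] at hne
  have hinactive : ∀ r ∈ cutRows C L M, idx C L M r ∉ T ∧ OccRow C (r + 1) := by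
    intro r hr
    have h1 : r ∉ (cutRows C L M).filter
        (fun r => idx C L M r ∈ T ∨ ¬ OccRow C (r + 1)) := by rw [hne]; simp
    simp only [Finset.mem_filter, hr, true_and] at h1
    push_neg at h1
    exact h1
  -- L ≤ M
  have hLocc : OccRow C L := L_occupied hanch
  have hLM : L ≤ M := by
    by_contra hctr
    push_neg at hctr
    -- row L occupied means some placement has a row L ≤ M
    obtain ⟨p, hp, hrow⟩ := hLocc
    have := (rows_le (by omega) (hC.2.1 p hp) hrow).2
    omega
  -- every row in [L, M) is occupied
  have hfull : ∀ r, L ≤ r → r < M → OccRow C r := by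
    intro r₀ hLr₀ hr₀M
    by_contra hunocc
    -- take the largest occupied row below r₀
    set S : Finset ℕ := (Finset.Ico L r₀).filter (fun a => OccRow C a) with hS
    have hSne : S.Nonempty := by
      refine ⟨L, ?_⟩
      simp only [hS, Finset.mem_filter, Finset.mem_Ico]
      have : L ≠ r₀ := by rintro rfl; exact hunocc hLocc
      exact ⟨⟨le_rfl, by omega⟩, hLocc⟩
    set b := S.max' hSne with hb
    have hbS : b ∈ S := Finset.max'_mem _ _
    simp only [hS, Finset.mem_filter, Finset.mem_Ico] at hbS
    obtain ⟨⟨hLb, hbr₀⟩, hbocc⟩ := hbS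
    have hb1 : ¬ OccRow C (b + 1) := by
      intro hocc1
      have hble : b + 1 ≤ r₀ := by omega
      rcases Nat.lt_or_ge (b+1) r₀ with hlt | hge
      · have : b + 1 ∈ S := by
          simp only [hS, Finset.mem_filter, Finset.mem_Ico]
          exact ⟨⟨by omega, hlt⟩, hocc1⟩
        have := Finset.le_max' _ _ this
        omega
      · have : b + 1 = r₀ := by omega
        rw [this] at hocc1
        exact hunocc hocc1
    have hbcut : b ∈ cutRows C L M := by
      rw [mem_cutRows]
      refine ⟨⟨hLb, by omega⟩, hbocc, ?_⟩
      rintro ⟨p, hp, h1, h2⟩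
      exact hb1 ⟨p, hp, h2⟩
    exact hb1 (hinactive b hbcut).2
  -- apply the height bound
  have hbound := height_bound (by omega) hC hanch hLM hfull
  -- card bounds
  set q := (cutRows C L M).card with hq
  set u := (upper C L).card with hu
  have hub := upper_card_bound (k := k) (n := n) (M := M) (t := t) (by omega) hC hanch
  have hqu := cut_card_le_upper (k := k) (n := n) (t := t) (by omega) hC htop
  rw [← hL] at hub hqu
  -- T is disjoint from the image of idx
  have hTq : T.card + q ≤ j + 1 := by
    have himg : (cutRows C L M).image (idx C L M) ⊆ Finset.range (j + 1) := by
      intro x hx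
      rw [Finset.mem_image] at hx
      obtain ⟨r, hr, rfl⟩ := hx
      rw [Finset.mem_range]
      have h1 := idx_lt_of_mem hr
      omega
    have hdisj : Disjoint T ((cutRows C L M).image (idx C L M)) := by
      rw [Finset.disjoint_right]
      intro x hx hxT
      rw [Finset.mem_image] at hx
      obtain ⟨r, hr, rfl⟩ := hx
      exact (hinactive r hr).1 hxT
    have hcardimg : ((cutRows C L M).image (idx C L M)).card = q := by
      rw [Finset.card_image_of_injOn idx_injOn]
    have hun : T ∪ (cutRows C L M).image (idx C L M) ⊆ Finset.range (j + 1) :=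
      Finset.union_subset hT himg
    have := Finset.card_le_card hun
    rw [Finset.card_union_of_disjoint hdisj, hcardimg] at this
    simpa using this
  -- final arithmetic contradiction
  have hukb : (k - 1) * (u + 1) ≤ (k - 1) * (j + 2) := by
    apply Nat.mul_le_mul_left
    omega
  have h7 : (k - 1) * (j + 2) = k * (j + 2) - (j + 2) := by
    rw [Nat.sub_mul, one_mul]
  have h8 : j + 2 ≤ k * (j + 2) := Nat.le_mul_of_pos_left _ (by omega)
  have h9 : k * s = t * k + k * (j + 2) := by subst hsj; ring
  have hexp : k * s = t * k + (k - 1) * (j + 2) + (j + 2) := by omega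
  omega

end Config

section Shift

def rowMapUp (w a : ℕ) : ℕ := if w < a then a + 1 else a

def rowMapDown (w a : ℕ) : ℕ := if w + 1 < a then a - 1 else a

def upSite (w : ℕ) (q : ℕ × ℕ) : ℕ × ℕ := (q.1, rowMapUp w q.2)

def downSite (w : ℕ) (q : ℕ × ℕ) : ℕ × ℕ := (q.1, rowMapDown w q.2)

def shiftUp (w : ℕ) (C : Cfg) : Cfg := C.image (fun p => p.image (upSite w))

def shiftDown (w : ℕ) (C : Cfg) : Cfg := C.image (fun p => p.image (downSite w))

lemma rowMapUp_le {w a : ℕ} : a ≤ rowMapUp w a := by unfold rowMapUp; split_ifs <;> omega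

lemma rowMapUp_inj {w : ℕ} : Function.Injective (rowMapUp w) := by
  intro a b
  unfold rowMapUp
  split_ifs <;> omega

lemma upSite_inj {w : ℕ} : Function.Injective (upSite w) := by
  rintro ⟨x, a⟩ ⟨y, b⟩ h
  simp only [upSite, Prod.mk.injEq] at h
  exact Prod.ext h.1 (rowMapUp_inj h.2)

lemma downSite_upSite {w : ℕ} (q : ℕ × ℕ) : downSite w (upSite w q) = q := by
  cases q with
  | mk x a =>
    simp only [upSite, downSite, rowMapUp, rowMapDown, Prod.mk.injEq, true_and]
    split_ifs <;> omega

lemma upSite_downSite {w : ℕ} {q : ℕ × ℕ} (h : q.2 ≠ w + 1) : upSite w (downSite w q) = q := by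
  cases q with
  | mk x a =>
    simp only [upSite, downSite, rowMapUp, rowMapDown, Prod.mk.injEq, true_and]
    simp only at h
    split_ifs <;> omega

lemma rowsOf_image_map {p : Finset (ℕ × ℕ)} {g : ℕ → ℕ} :
    rowsOf (p.image (fun q => (q.1, g q.2))) = (rowsOf p).image g := by
  unfold rowsOf
  rw [Finset.image_image, Finset.image_image]
  rfl

lemma rowsOf_image_up {p : Finset (ℕ × ℕ)} {w : ℕ} :
    rowsOf (p.image (upSite w)) = (rowsOf p).image (rowMapUp w) :=
  rowsOf_image_map

lemma rowsOf_image_down {p : Finset (ℕ × ℕ)} {w : ℕ} :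
    rowsOf (p.image (downSite w)) = (rowsOf p).image (rowMapDown w) :=
  rowsOf_image_map

lemma horiz_image {k c r : ℕ} (g : ℕ → ℕ) :
    (horizKmer k c r).image (fun q => (q.1, g q.2)) = horizKmer k c (g r) := by
  unfold horizKmer
  rw [Finset.image_image]
  rfl

lemma vert_image {k c r : ℕ} (g : ℕ → ℕ) (h : ∀ i < k, g (r + i) = g r + i) :
    (vertKmer k c r).image (fun q => (q.1, g q.2)) = vertKmer k c (g r) := by
  unfold vertKmer
  rw [Finset.image_image]
  apply Finset.image_congr
  intro i hi
  simp only [Finset.mem_coe, Finset.mem_range] at hi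
  simp only [Function.comp]
  rw [h i hi]

lemma placement_mono {k n M M' : ℕ} {p : Finset (ℕ × ℕ)} (hp : IsFreePlacement k n M p)
    (h : M ≤ M') : IsFreePlacement k n M' p := by
  rcases hp with ⟨c, r, h1, h2, h3, h4, rfl⟩ | ⟨c, r, h1, h2, h3, h4, rfl⟩
  · exact Or.inl ⟨c, r, h1, h2, h3, by omega, rfl⟩
  · exact Or.inr ⟨c, r, h1, h2, h3, by omega, rfl⟩

lemma placement_split {k n M w : ℕ} {p : Finset (ℕ × ℕ)} (hk : 1 ≤ k)
    (hp : IsFreePlacement k n M p) (hnc : ¬ (w ∈ rowsOf p ∧ w + 1 ∈ rowsOf p)) :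
    (∀ a ∈ rowsOf p, a ≤ w) ∨ (∀ a ∈ rowsOf p, w < a) := by
  by_contra hctr
  push_neg at hctr
  obtain ⟨⟨a, ha, haw⟩, b, hb, hbw⟩ := hctr
  exact hnc ⟨rows_interval hk hp hb ha (by omega) (by omega),
    rows_interval hk hp hb ha (by omega) (by omega)⟩

lemma image_id_of_le {p : Finset (ℕ × ℕ)} {w : ℕ} (h : ∀ a ∈ rowsOf p, a ≤ w) :
    p.image (upSite w) = p := by
  have : ∀ q ∈ p, upSite w q = q := by
    intro q hq
    have hle := h q.2 (mem_rowsOf.2 ⟨q, hq, rfl⟩)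
    simp only [upSite, rowMapUp, if_neg (by omega : ¬ w < q.2)]
  calc p.image (upSite w) = p.image id := Finset.image_congr (fun q hq => this q hq)
    _ = p := Finset.image_id

lemma image_id_of_le_down {p : Finset (ℕ × ℕ)} {w : ℕ} (h : ∀ a ∈ rowsOf p, a ≤ w) :
    p.image (downSite w) = p := by
  have : ∀ q ∈ p, downSite w q = q := by
    intro q hq
    have hle := h q.2 (mem_rowsOf.2 ⟨q, hq, rfl⟩)
    simp only [downSite, rowMapDown, if_neg (by omega : ¬ w + 1 < q.2)]
  calc p.image (downSite w) = p.image id := Finset.image_congr (fun q hq => this q hq)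
    _ = p := Finset.image_id

lemma placement_up {k n M w : ℕ} {p : Finset (ℕ × ℕ)} (hk : 1 ≤ k)
    (hp : IsFreePlacement k n M p) (hnc : ¬ (w ∈ rowsOf p ∧ w + 1 ∈ rowsOf p)) :
    IsFreePlacement k n (M + 1) (p.image (upSite w)) := by
  rcases placement_split hk hp hnc with hle | hgt
  · rw [image_id_of_le hle]
    exact placement_mono hp (by omega)
  · rcases hp with ⟨c, r, h1, h2, h3, h4, rfl⟩ | ⟨c, r, h1, h2, h3, h4, rfl⟩
    · have hr : w < r := hgt r (by rw [rowsOf_horiz hk]; simp)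
      left
      refine ⟨c, r + 1, h1, h2, by omega, by omega, ?_⟩
      show (horizKmer k c r).image (upSite w) = _
      rw [show upSite w = (fun q : ℕ × ℕ => (q.1, rowMapUp w q.2)) from rfl, horiz_image]
      simp [rowMapUp, if_pos hr]
    · have hr : w < r := hgt r (mem_rowsOf_vert.2 ⟨le_rfl, by omega⟩)
      right
      refine ⟨c, r + 1, h1, h2, by omega, by omega, ?_⟩
      show (vertKmer k c r).image (upSite w) = _
      rw [show upSite w = (fun q : ℕ × ℕ => (q.1, rowMapUp w q.2)) from rfl,
        vert_image (rowMapUp w) (fun i hi => ?_)]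
      · simp [rowMapUp, if_pos hr]
      · simp only [rowMapUp, if_pos (by omega : w < r + i), if_pos hr]
        omega

lemma placement_down {k n M w : ℕ} {p : Finset (ℕ × ℕ)} (hk : 1 ≤ k) (hw : 1 ≤ w)
    (hwM : w + 2 ≤ M)
    (hp : IsFreePlacement k n M p) (hnc : ¬ (w ∈ rowsOf p ∧ w + 1 ∈ rowsOf p))
    (hnw1 : (w + 1) ∉ rowsOf p) :
    IsFreePlacement k n (M - 1) (p.image (downSite w)) := by
  rcases placement_split hk hp hnc with hle | hgt
  · rw [image_id_of_le_down hle]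
    rcases hp with ⟨c, r, h1, h2, h3, h4, rfl⟩ | ⟨c, r, h1, h2, h3, h4, rfl⟩
    · have hr : r ≤ w := hle r (by rw [rowsOf_horiz hk]; simp)
      exact Or.inl ⟨c, r, h1, h2, h3, by omega, rfl⟩
    · have hr : r + (k - 1) ≤ w := hle (r + (k - 1)) (mem_rowsOf_vert.2 ⟨by omega, by omega⟩)
      exact Or.inr ⟨c, r, h1, h2, h3, by omega, rfl⟩
  · -- all rows > w, and r ≠ w+1, so all rows ≥ w+2
    rcases hp with ⟨c, r, h1, h2, h3, h4, rfl⟩ | ⟨c, r, h1, h2, h3, h4, rfl⟩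
    · have hr : w < r := hgt r (by rw [rowsOf_horiz hk]; simp)
      have hr2 : w + 2 ≤ r := by
        rcases Nat.lt_or_ge (w + 1) r with h | h
        · omega
        · exfalso; apply hnw1; rw [rowsOf_horiz hk]; simp; omega
      left
      refine ⟨c, r - 1, h1, h2, by omega, by omega, ?_⟩
      show (horizKmer k c r).image (downSite w) = _
      rw [show downSite w = (fun q : ℕ × ℕ => (q.1, rowMapDown w q.2)) from rfl, horiz_image]
      simp only [rowMapDown, if_pos (by omega : w + 1 < r)]
    · have hr : w < r := hgt r (mem_rowsOf_vert.2 ⟨le_rfl, by omega⟩)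
      have hr2 : w + 2 ≤ r := by
        rcases Nat.lt_or_ge (w + 1) r with h | h
        · omega
        · exfalso; apply hnw1; exact mem_rowsOf_vert.2 ⟨by omega, by omega⟩
      right
      refine ⟨c, r - 1, h1, h2, by omega, by omega, ?_⟩
      show (vertKmer k c r).image (downSite w) = _
      rw [show downSite w = (fun q : ℕ × ℕ => (q.1, rowMapDown w q.2)) from rfl,
        vert_image (rowMapDown w) (fun i hi => ?_)]
      · simp only [rowMapDown, if_pos (by omega : w + 1 < r)]
      · simp only [rowMapDown, if_pos (by omega : w + 1 < r + i), if_pos (by omega : w + 1 < r)]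
        omega

end Shift

lemma rowMapUp_succ_of {w b b' a : ℕ} (h1 : rowMapUp w b = a) (h2 : rowMapUp w b' = a + 1) :
    b' = b + 1 := by
  unfold rowMapUp at h1 h2
  split_ifs at h1 h2 <;> omega

lemma rowMapUp_succ {w b : ℕ} (h : b ≠ w) : rowMapUp w (b + 1) = rowMapUp w b + 1 := by
  unfold rowMapUp
  split_ifs <;> omega

lemma rowMapUp_lt_iff {w a b : ℕ} : rowMapUp w a < rowMapUp w b ↔ a < b := by
  unfold rowMapUp
  split_ifs <;> omega

lemma rowMapDown_succ {w b : ℕ} (h1 : b ≠ w) (h2 : b ≠ w + 1) :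
    rowMapDown w (b + 1) = rowMapDown w b + 1 := by
  unfold rowMapDown
  split_ifs <;> omega

lemma rowMapDown_inj_on {w b r : ℕ} (h : rowMapDown w b = rowMapDown w r)
    (hb : b ≠ w + 1) (hr : r ≠ w + 1) : b = r := by
  unfold rowMapDown at h
  split_ifs at h <;> omega

lemma rowMapDown_lt_iff {w a b : ℕ} (ha : a ≠ w + 1) (hb : b ≠ w + 1) :
    rowMapDown w a < rowMapDown w b ↔ a < b := by
  unfold rowMapDown
  split_ifs <;> omega

section ConfigShift

variable {k n M s t w : ℕ} {C : Cfg}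

/-- generic occupancy transform under a site map -/
lemma occ_image_map {g : ℕ → ℕ} {a : ℕ} :
    OccRow (C.image (fun p => p.image (fun q => (q.1, g q.2)))) a ↔
      ∃ b, g b = a ∧ OccRow C b := by
  constructor
  · rintro ⟨p', hp', ha⟩
    rw [Finset.mem_image] at hp'
    obtain ⟨p, hp, rfl⟩ := hp'
    rw [rowsOf_image_map, Finset.mem_image] at ha
    obtain ⟨b, hb, rfl⟩ := ha
    exact ⟨b, rfl, p, hp, hb⟩
  · rintro ⟨b, rfl, p, hp, hb⟩
    exact ⟨p.image _, Finset.mem_image_of_mem _ hp,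
      by rw [rowsOf_image_map]; exact Finset.mem_image_of_mem _ hb⟩

lemma shiftUp_occ {a : ℕ} :
    OccRow (shiftUp w C) a ↔ ∃ b, rowMapUp w b = a ∧ OccRow C b :=
  occ_image_map

lemma shiftDown_occ {a : ℕ} :
    OccRow (shiftDown w C) a ↔ ∃ b, rowMapDown w b = a ∧ OccRow C b :=
  occ_image_map

/-- hypothesis bundle for an up-shift at a cut row -/
lemma cut_no_cross (hw : w ∈ cutRows C (t * k + 1) M) :
    ∀ p ∈ C, ¬ (w ∈ rowsOf p ∧ w + 1 ∈ rowsOf p) := by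
  intro p hp hctr
  exact (mem_cutRows.1 hw).2.2 ⟨p, hp, hctr⟩

lemma shiftUp_cross (hk : 1 ≤ k) (hC : IsFreeConfig k n M s C)
    (hw : w ∈ cutRows C (t * k + 1) M) {a : ℕ} :
    CrossAt (shiftUp w C) a ↔ ∃ b, rowMapUp w b = a ∧ CrossAt C b := by
  constructor
  · rintro ⟨p', hp', ha, ha1⟩
    rw [shiftUp] at hp'
    rw [Finset.mem_image] at hp'
    obtain ⟨p, hp, rfl⟩ := hp'
    rw [show (Finset.image (upSite w) p) = p.image (fun q => (q.1, rowMapUp w q.2)) from rfl,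
      rowsOf_image_map, Finset.mem_image] at ha ha1
    obtain ⟨b, hb, hgb⟩ := ha
    obtain ⟨b', hb', hgb'⟩ := ha1
    have hbb' : b' = b + 1 := rowMapUp_succ_of hgb hgb'
    subst hbb'
    exact ⟨b, hgb, p, hp, hb, hb'⟩
  · rintro ⟨b, rfl, p, hp, hb, hb1⟩
    have hbw : b ≠ w := by
      rintro rfl
      exact (mem_cutRows.1 hw).2.2 ⟨p, hp, hb, hb1⟩
    refine ⟨p.image (upSite w), Finset.mem_image_of_mem _ hp, ?_, ?_⟩
    · rw [show (Finset.image (upSite w) p) = p.image (fun q => (q.1, rowMapUp w q.2)) from rfl,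
        rowsOf_image_map]
      exact Finset.mem_image_of_mem _ hb
    · rw [show (Finset.image (upSite w) p) = p.image (fun q => (q.1, rowMapUp w q.2)) from rfl,
        rowsOf_image_map]
      rw [← rowMapUp_succ hbw]
      exact Finset.mem_image_of_mem _ hb1

lemma shiftUp_config (hk : 1 ≤ k) (hC : IsFreeConfig k n M s C)
    (hw : w ∈ cutRows C (t * k + 1) M) :
    IsFreeConfig k n (M + 1) s (shiftUp w C) := by
  have hnc := cut_no_cross hw
  refine ⟨?_, ?_, ?_⟩
  · rw [shiftUp, Finset.card_image_of_injective _ (Finset.image_injective upSite_inj)]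
    exact hC.1
  · intro p' hp'
    rw [shiftUp, Finset.mem_image] at hp'
    obtain ⟨p, hp, rfl⟩ := hp'
    exact placement_up hk (hC.2.1 p hp) (hnc p hp)
  · intro p' hp' q' hq' hne
    simp only [shiftUp, Finset.coe_image, Set.mem_image, Finset.mem_coe] at hp' hq'
    obtain ⟨p, hp, rfl⟩ := hp'
    obtain ⟨q, hq, rfl⟩ := hq'
    have hpq : p ≠ q := by rintro rfl; exact hne rfl
    have hdisj := hC.2.2 (Finset.mem_coe.2 hp) (Finset.mem_coe.2 hq) hpq
    exact Finset.disjoint_image upSite_inj |>.2 hdisj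

lemma shiftUp_anch (hk : 1 ≤ k) (hC : IsFreeConfig k n M s C)
    (hw : w ∈ cutRows C (t * k + 1) M)
    (hanch : ∀ j' ≤ t, BottomAnchored C (j' * k + 1)) :
    ∀ j' ≤ t, BottomAnchored (shiftUp w C) (j' * k + 1) := by
  have hnc := cut_no_cross hw
  have hLw : t * k + 1 ≤ w := (mem_cutRows.1 hw).1.1
  intro j' hj'
  have hρ : j' * k + 1 ≤ w := by
    have : j' * k ≤ t * k := Nat.mul_le_mul_right k hj'
    omega
  constructor
  · obtain ⟨p, hp, q, hq, hq2⟩ := (hanch j' hj').1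
    have hrow : (j' * k + 1) ∈ rowsOf p := mem_rowsOf.2 ⟨q, hq, hq2⟩
    have hle : ∀ a ∈ rowsOf p, a ≤ w := by
      rcases placement_split hk (hC.2.1 p hp) (hnc p hp) with h | h
      · exact h
      · exact absurd (h _ hrow) (by omega)
    refine ⟨p.image (upSite w), Finset.mem_image_of_mem _ hp, q, ?_, hq2⟩
    rw [image_id_of_le hle]
    exact hq
  · rintro p' hp' ⟨q', hq', hq'2⟩
    rw [shiftUp, Finset.mem_image] at hp'
    obtain ⟨p, hp, rfl⟩ := hp'
    have hrow' : (j' * k + 1) ∈ rowsOf (p.image (upSite w)) := mem_rowsOf.2 ⟨q', hq', hq'2⟩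
    rw [show (Finset.image (upSite w) p) = p.image (fun q => (q.1, rowMapUp w q.2)) from rfl,
      rowsOf_image_map, Finset.mem_image] at hrow'
    obtain ⟨b, hb, hgb⟩ := hrow'
    have hbρ : b = j' * k + 1 := by
      unfold rowMapUp at hgb
      split_ifs at hgb <;> omega
    subst hbρ
    have htouch := (hanch j' hj').2 p hp (mem_rowsOf.1 hb)
    constructor
    · exact ⟨q', hq', hq'2⟩
    · intro q hq
      rw [Finset.mem_image] at hq
      obtain ⟨q₀, hq₀, rfl⟩ := hq
      have h1 := htouch.2 q₀ hq₀
      have h2 : q₀.2 ≤ (upSite w q₀).2 := rowMapUp_le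
      omega

lemma shiftUp_top (hw : w ∈ cutRows C (t * k + 1) M) (htop : OccRow C M) :
    OccRow (shiftUp w C) (M + 1) := by
  rw [shiftUp_occ]
  refine ⟨M, ?_, htop⟩
  have : w < M := (mem_cutRows.1 hw).1.2
  unfold rowMapUp
  rw [if_pos this]

lemma shiftUp_cuts (hk : 1 ≤ k) (hC : IsFreeConfig k n M s C)
    (hw : w ∈ cutRows C (t * k + 1) M) :
    cutRows (shiftUp w C) (t * k + 1) (M + 1) = (cutRows C (t * k + 1) M).image (rowMapUp w) := by
  have hLw : t * k + 1 ≤ w := (mem_cutRows.1 hw).1.1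
  have hwM : w < M := (mem_cutRows.1 hw).1.2
  ext r'
  rw [mem_cutRows, Finset.mem_image]
  constructor
  · rintro ⟨⟨hL, hM⟩, hocc', hncross'⟩
    rw [shiftUp_occ] at hocc'
    obtain ⟨b, hgb, hocc⟩ := hocc'
    have hble : b ≤ r' := hgb ▸ rowMapUp_le
    have hbL : t * k + 1 ≤ b := by
      by_contra hctr
      have : rowMapUp w b = b := by unfold rowMapUp; rw [if_neg (by omega)]
      omega
    have hbM : b < M := by
      unfold rowMapUp at hgb
      split_ifs at hgb <;> omega
    refine ⟨b, mem_cutRows.2 ⟨⟨hbL, hbM⟩, hocc, ?_⟩, hgb⟩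
    intro hcross
    exact hncross' ((shiftUp_cross hk hC hw).2 ⟨b, hgb, hcross⟩)
  · rintro ⟨r, hr, rfl⟩
    obtain ⟨⟨hrL, hrM⟩, hocc, hncross⟩ := mem_cutRows.1 hr
    refine ⟨⟨le_trans hrL rowMapUp_le, ?_⟩, ?_, ?_⟩
    · unfold rowMapUp; split_ifs <;> omega
    · exact shiftUp_occ.2 ⟨r, rfl, hocc⟩
    · intro hcross'
      obtain ⟨b, hgb, hcross⟩ := (shiftUp_cross hk hC hw).1 hcross'
      rw [rowMapUp_inj hgb] at hcross
      exact hncross hcross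

lemma shiftUp_idx (hk : 1 ≤ k) (hC : IsFreeConfig k n M s C)
    (hw : w ∈ cutRows C (t * k + 1) M) {r : ℕ} (hr : r ∈ cutRows C (t * k + 1) M) :
    idx (shiftUp w C) (t * k + 1) (M + 1) (rowMapUp w r) = idx C (t * k + 1) M r := by
  unfold idx
  rw [shiftUp_cuts hk hC hw]
  have himg : ((cutRows C (t * k + 1) M).image (rowMapUp w)).filter (fun x => x < rowMapUp w r)
      = ((cutRows C (t * k + 1) M).filter (fun x => x < r)).image (rowMapUp w) := by
    ext y
    simp only [Finset.mem_filter, Finset.mem_image]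
    constructor
    · rintro ⟨⟨x, hx, rfl⟩, hlt⟩
      exact ⟨x, ⟨hx, rowMapUp_lt_iff.1 hlt⟩, rfl⟩
    · rintro ⟨x, ⟨hx, hlt⟩, rfl⟩
      exact ⟨⟨x, hx, rfl⟩, rowMapUp_lt_iff.2 hlt⟩
  rw [himg, Finset.card_image_of_injective _ rowMapUp_inj]

lemma shiftDown_shiftUp (w : ℕ) (C : Cfg) : shiftDown w (shiftUp w C) = C := by
  unfold shiftUp shiftDown
  rw [Finset.image_image]
  have h1 : ∀ p : Finset (ℕ × ℕ), ((Finset.image (upSite w) p).image (downSite w)) = p := by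
    intro p
    rw [Finset.image_image]
    have : ∀ q ∈ p, (downSite w ∘ upSite w) q = q := fun q _ => downSite_upSite q
    calc p.image (downSite w ∘ upSite w) = p.image id := Finset.image_congr this
      _ = p := Finset.image_id
  calc C.image ((fun p => Finset.image (downSite w) p) ∘ (fun p => Finset.image (upSite w) p))
      = C.image id := Finset.image_congr (fun p _ => h1 p)
    _ = C := Finset.image_id

lemma not_occ_row_mem {a : ℕ} (hno : ¬ OccRow C a) {p : Finset (ℕ × ℕ)} (hp : p ∈ C) :
    a ∉ rowsOf p := fun h => hno ⟨p, hp, h⟩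

lemma shiftUp_shiftDown (hw1 : ¬ OccRow C (w + 1)) : shiftUp w (shiftDown w C) = C := by
  unfold shiftUp shiftDown
  rw [Finset.image_image]
  have h1 : ∀ p ∈ C, ((fun p => Finset.image (upSite w) p) ∘
      (fun p => Finset.image (downSite w) p)) p = p := by
    intro p hp
    simp only [Function.comp]
    rw [Finset.image_image]
    have : ∀ q ∈ p, (upSite w ∘ downSite w) q = q := by
      intro q hq
      apply upSite_downSite
      intro hq2
      exact (not_occ_row_mem hw1 hp) (mem_rowsOf.2 ⟨q, hq, hq2⟩)
    calc p.image (upSite w ∘ downSite w) = p.image id := Finset.image_congr this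
      _ = p := Finset.image_id
  calc C.image ((fun p => Finset.image (upSite w) p) ∘ (fun p => Finset.image (downSite w) p))
      = C.image id := Finset.image_congr (fun p hp => h1 p hp)
    _ = C := Finset.image_id

lemma shiftDown_cross (hk : 1 ≤ k) (hC : IsFreeConfig k n M s C)
    (hw : w ∈ cutRows C (t * k + 1) M) (hw1 : ¬ OccRow C (w + 1)) {a : ℕ} :
    CrossAt (shiftDown w C) a ↔ ∃ b, rowMapDown w b = a ∧ CrossAt C b := by
  constructor
  · rintro ⟨p', hp', ha, ha1⟩
    rw [shiftDown, Finset.mem_image] at hp'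
    obtain ⟨p, hp, rfl⟩ := hp'
    rw [show (Finset.image (downSite w) p) = p.image (fun q => (q.1, rowMapDown w q.2)) from rfl,
      rowsOf_image_map, Finset.mem_image] at ha ha1
    obtain ⟨b, hb, hgb⟩ := ha
    obtain ⟨b', hb', hgb'⟩ := ha1
    have hnw1 : w + 1 ∉ rowsOf p := not_occ_row_mem hw1 hp
    have hbb' : b' = b + 1 := by
      have hbne : b ≠ w + 1 := fun h => hnw1 (h ▸ hb)
      have hb'ne : b' ≠ w + 1 := fun h => hnw1 (h ▸ hb')
      by_contra hne
      -- the only non-successive possibility is b = w, b' = w+2, which traps w+1 in the interval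
      have : b = w ∧ b' = w + 2 := by
        unfold rowMapDown at hgb hgb'
        split_ifs at hgb hgb' <;> omega
      obtain ⟨rfl, rfl⟩ := this
      exact hnw1 (rows_interval hk (hC.2.1 p hp) hb hb' (by omega) (by omega))
    subst hbb'
    exact ⟨b, hgb, p, hp, hb, hb'⟩
  · rintro ⟨b, rfl, p, hp, hb, hb1⟩
    have hnw1 : w + 1 ∉ rowsOf p := not_occ_row_mem hw1 hp
    have hbne : b ≠ w + 1 := fun h => hnw1 (h ▸ hb)
    have hbnw : b ≠ w := by
      rintro rfl
      exact hnw1 hb1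
    refine ⟨p.image (downSite w), Finset.mem_image_of_mem _ hp, ?_, ?_⟩
    · rw [show (Finset.image (downSite w) p) = p.image (fun q => (q.1, rowMapDown w q.2)) from rfl,
        rowsOf_image_map]
      exact Finset.mem_image_of_mem _ hb
    · rw [show (Finset.image (downSite w) p) = p.image (fun q => (q.1, rowMapDown w q.2)) from rfl,
        rowsOf_image_map]
      rw [← rowMapDown_succ hbnw hbne]
      exact Finset.mem_image_of_mem _ hb1

lemma shiftDown_config (hk : 1 ≤ k) (hC : IsFreeConfig k n M s C)
    (hw : w ∈ cutRows C (t * k + 1) M) (hw1 : ¬ OccRow C (w + 1)) (htop : OccRow C M)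
    (hw0 : 1 ≤ w) :
    IsFreeConfig k n (M - 1) s (shiftDown w C) := by
  have hnc := cut_no_cross hw
  have hwM : w < M := (mem_cutRows.1 hw).1.2
  have hwM2 : w + 2 ≤ M := by
    rcases Nat.lt_or_ge (w + 1) M with h | h
    · omega
    · have : M = w + 1 := by omega
      exact absurd (this ▸ htop) hw1
  refine ⟨?_, ?_, ?_⟩
  · rw [shiftDown]
    rw [Finset.card_image_of_injOn, hC.1]
    intro p hp p' hp' heq
    have h1 : ∀ r ∈ C, (Finset.image (downSite w) r).image (upSite w) = r := by
      intro r hr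
      rw [Finset.image_image]
      have : ∀ q ∈ r, (upSite w ∘ downSite w) q = q := by
        intro q hq
        apply upSite_downSite
        intro hq2
        exact (not_occ_row_mem hw1 hr) (mem_rowsOf.2 ⟨q, hq, hq2⟩)
      calc r.image (upSite w ∘ downSite w) = r.image id := Finset.image_congr this
        _ = r := Finset.image_id
    have heq' : Finset.image (downSite w) p = Finset.image (downSite w) p' := heq
    calc p = (Finset.image (downSite w) p).image (upSite w) := (h1 p hp).symm
      _ = (Finset.image (downSite w) p').image (upSite w) := by rw [heq']
      _ = p' := h1 p' hp'
  · intro p' hp'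
    rw [shiftDown, Finset.mem_image] at hp'
    obtain ⟨p, hp, rfl⟩ := hp'
    exact placement_down hk hw0 hwM2 (hC.2.1 p hp) (hnc p hp) (not_occ_row_mem hw1 hp)
  · intro p' hp' q' hq' hne
    simp only [shiftDown, Finset.coe_image, Set.mem_image, Finset.mem_coe] at hp' hq'
    obtain ⟨p, hp, rfl⟩ := hp'
    obtain ⟨q, hq, rfl⟩ := hq'
    have hpq : p ≠ q := by rintro rfl; exact hne rfl
    have hdisj : Disjoint p q := hC.2.2 (Finset.mem_coe.2 hp) (Finset.mem_coe.2 hq) hpq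
    rw [Finset.disjoint_left] at hdisj ⊢
    intro y hy hy'
    rw [Finset.mem_image] at hy hy'
    obtain ⟨z, hz, rfl⟩ := hy
    obtain ⟨z', hz', heq⟩ := hy'
    have hzz' : z = z' := by
      have e1 : upSite w (downSite w z) = z := upSite_downSite
        (fun h => (not_occ_row_mem hw1 hp) (mem_rowsOf.2 ⟨z, hz, h⟩))
      have e2 : upSite w (downSite w z') = z' := upSite_downSite
        (fun h => (not_occ_row_mem hw1 hq) (mem_rowsOf.2 ⟨z', hz', h⟩))
      rw [← e1, ← e2, heq]
    exact hdisj hz (hzz' ▸ hz')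

lemma shiftDown_anch (hk : 1 ≤ k) (hC : IsFreeConfig k n M s C)
    (hw : w ∈ cutRows C (t * k + 1) M) (hw1 : ¬ OccRow C (w + 1))
    (hanch : ∀ j' ≤ t, BottomAnchored C (j' * k + 1)) :
    ∀ j' ≤ t, BottomAnchored (shiftDown w C) (j' * k + 1) := by
  have hnc := cut_no_cross hw
  have hLw : t * k + 1 ≤ w := (mem_cutRows.1 hw).1.1
  intro j' hj'
  have hρ : j' * k + 1 ≤ w := by
    have : j' * k ≤ t * k := Nat.mul_le_mul_right k hj'
    omega
  constructor
  · obtain ⟨p, hp, q, hq, hq2⟩ := (hanch j' hj').1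
    have hrow : (j' * k + 1) ∈ rowsOf p := mem_rowsOf.2 ⟨q, hq, hq2⟩
    have hle : ∀ a ∈ rowsOf p, a ≤ w := by
      rcases placement_split hk (hC.2.1 p hp) (hnc p hp) with h | h
      · exact h
      · exact absurd (h _ hrow) (by omega)
    refine ⟨p.image (downSite w), Finset.mem_image_of_mem _ hp, q, ?_, hq2⟩
    rw [image_id_of_le_down hle]
    exact hq
  · rintro p' hp' ⟨q', hq', hq'2⟩
    rw [shiftDown, Finset.mem_image] at hp'
    obtain ⟨p, hp, rfl⟩ := hp'
    have hrow' : (j' * k + 1) ∈ rowsOf (p.image (downSite w)) := mem_rowsOf.2 ⟨q', hq', hq'2⟩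
    rw [show (Finset.image (downSite w) p) = p.image (fun q => (q.1, rowMapDown w q.2)) from rfl,
      rowsOf_image_map, Finset.mem_image] at hrow'
    obtain ⟨b, hb, hgb⟩ := hrow'
    have hbρ : b = j' * k + 1 := by
      unfold rowMapDown at hgb
      split_ifs at hgb <;> omega
    subst hbρ
    have htouch := (hanch j' hj').2 p hp (mem_rowsOf.1 hb)
    constructor
    · exact ⟨q', hq', hq'2⟩
    · intro q hq
      rw [Finset.mem_image] at hq
      obtain ⟨q₀, hq₀, rfl⟩ := hq
      have h1 := htouch.2 q₀ hq₀
      show j' * k + 1 ≤ rowMapDown w q₀.2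
      unfold rowMapDown
      split_ifs <;> omega

lemma shiftDown_top (hw : w ∈ cutRows C (t * k + 1) M) (hw1 : ¬ OccRow C (w + 1))
    (htop : OccRow C M) :
    OccRow (shiftDown w C) (M - 1) := by
  have hwM : w < M := (mem_cutRows.1 hw).1.2
  have hwM2 : w + 2 ≤ M := by
    rcases Nat.lt_or_ge (w + 1) M with h | h
    · omega
    · have : M = w + 1 := by omega
      exact absurd (this ▸ htop) hw1
  rw [shiftDown_occ]
  refine ⟨M, ?_, htop⟩
  unfold rowMapDown
  rw [if_pos (by omega)]

lemma shiftDown_cuts (hk : 1 ≤ k) (hC : IsFreeConfig k n M s C)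
    (hw : w ∈ cutRows C (t * k + 1) M) (hw1 : ¬ OccRow C (w + 1)) (htop : OccRow C M) :
    cutRows (shiftDown w C) (t * k + 1) (M - 1)
      = (cutRows C (t * k + 1) M).image (rowMapDown w) := by
  have hLw : t * k + 1 ≤ w := (mem_cutRows.1 hw).1.1
  have hwM : w < M := (mem_cutRows.1 hw).1.2
  have hwM2 : w + 2 ≤ M := by
    rcases Nat.lt_or_ge (w + 1) M with h | h
    · omega
    · have : M = w + 1 := by omega
      exact absurd (this ▸ htop) hw1
  ext r'
  rw [mem_cutRows, Finset.mem_image]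
  constructor
  · rintro ⟨⟨hL, hM⟩, hocc', hncross'⟩
    rw [shiftDown_occ] at hocc'
    obtain ⟨b, hgb, hocc⟩ := hocc'
    have hbne : b ≠ w + 1 := fun h => hw1 (h ▸ hocc)
    have hbL : t * k + 1 ≤ b := by
      by_contra hctr
      have : rowMapDown w b = b := by unfold rowMapDown; rw [if_neg (by omega)]
      omega
    have hbM : b < M := by
      unfold rowMapDown at hgb
      split_ifs at hgb <;> omega
    refine ⟨b, mem_cutRows.2 ⟨⟨hbL, hbM⟩, hocc, ?_⟩, hgb⟩
    intro hcross
    exact hncross' ((shiftDown_cross hk hC hw hw1).2 ⟨b, hgb, hcross⟩)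
  · rintro ⟨r, hr, rfl⟩
    obtain ⟨⟨hrL, hrM⟩, hocc, hncross⟩ := mem_cutRows.1 hr
    have hrne : r ≠ w + 1 := fun h => hw1 (h ▸ hocc)
    refine ⟨⟨?_, ?_⟩, ?_, ?_⟩
    · unfold rowMapDown; split_ifs <;> omega
    · unfold rowMapDown; split_ifs <;> omega
    · exact shiftDown_occ.2 ⟨r, rfl, hocc⟩
    · intro hcross'
      obtain ⟨b, hgb, hcross⟩ := (shiftDown_cross hk hC hw hw1).1 hcross'
      have hbocc : OccRow C b := by
        obtain ⟨p, hp, hb, _⟩ := hcross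
        exact ⟨p, hp, hb⟩
      have hbne : b ≠ w + 1 := fun h => hw1 (h ▸ hbocc)
      rw [rowMapDown_inj_on hgb hbne hrne] at hcross
      exact hncross hcross

lemma shiftDown_idx (hk : 1 ≤ k) (hC : IsFreeConfig k n M s C)
    (hw : w ∈ cutRows C (t * k + 1) M) (hw1 : ¬ OccRow C (w + 1)) (htop : OccRow C M)
    {r : ℕ} (hr : r ∈ cutRows C (t * k + 1) M) :
    idx (shiftDown w C) (t * k + 1) (M - 1) (rowMapDown w r) = idx C (t * k + 1) M r := by
  have hne : ∀ x ∈ cutRows C (t * k + 1) M, x ≠ w + 1 := by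
    intro x hx h
    exact hw1 (h ▸ (mem_cutRows.1 hx).2.1)
  unfold idx
  rw [shiftDown_cuts hk hC hw hw1 htop]
  have himg : ((cutRows C (t * k + 1) M).image (rowMapDown w)).filter
        (fun x => x < rowMapDown w r)
      = ((cutRows C (t * k + 1) M).filter (fun x => x < r)).image (rowMapDown w) := by
    ext y
    simp only [Finset.mem_filter, Finset.mem_image]
    constructor
    · rintro ⟨⟨x, hx, rfl⟩, hlt⟩
      exact ⟨x, ⟨hx, (rowMapDown_lt_iff (hne x hx) (hne r hr)).1 hlt⟩, rfl⟩
    · rintro ⟨x, ⟨hx, hlt⟩, rfl⟩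
      exact ⟨⟨x, hx, rfl⟩, (rowMapDown_lt_iff (hne x hx) (hne r hr)).2 hlt⟩
  rw [himg]
  apply Finset.card_image_of_injOn
  intro x hx y hy hxy
  simp only [Finset.coe_filter, Set.mem_setOf_eq] at hx hy
  exact rowMapDown_inj_on hxy (hne x hx.1) (hne y hy.1)

end ConfigShift

section Assembly

variable (k n s t j m : ℕ)

def Pred (M : ℕ) (C : Cfg) : Prop :=
  IsFreeConfig k n M s C ∧ (∀ j' ≤ t, BottomAnchored C (j' * k + 1)) ∧
    ∃ p ∈ C, ∃ q ∈ p, q.2 = M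

noncomputable def ConfSet (M : ℕ) : Finset Cfg :=
  ((Finset.Icc 1 n ×ˢ Finset.Icc 1 m).powerset.powerset).filter (Pred k n s t M)

noncomputable def Obj : Finset ((_ : Finset ℕ) × Cfg) :=
  ((Finset.range (j + 1)).powerset).sigma (fun T => ConfSet k n s t m (m - T.card))

noncomputable def ActSet (T : Finset ℕ) (C : Cfg) : Finset ℕ :=
  (cutRows C (t * k + 1) (m - T.card)).filter
    (fun r => idx C (t * k + 1) (m - T.card) r ∈ T ∨ ¬ OccRow C (r + 1))

noncomputable def invo (x : (_ : Finset ℕ) × Cfg) : (_ : Finset ℕ) × Cfg :=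
  if hne : (ActSet k t m x.1 x.2).Nonempty then
    if idx x.2 (t * k + 1) (m - x.1.card) ((ActSet k t m x.1 x.2).min' hne) ∈ x.1 then
      ⟨x.1.erase (idx x.2 (t * k + 1) (m - x.1.card) ((ActSet k t m x.1 x.2).min' hne)),
        shiftUp ((ActSet k t m x.1 x.2).min' hne) x.2⟩
    else
      ⟨insert (idx x.2 (t * k + 1) (m - x.1.card) ((ActSet k t m x.1 x.2).min' hne)) x.1,
        shiftDown ((ActSet k t m x.1 x.2).min' hne) x.2⟩
  else x

variable {k n s t j m}

lemma mem_ConfSet (hk : 1 ≤ k) {M : ℕ} (hMm : M ≤ m) {C : Cfg} :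
    C ∈ ConfSet k n s t m M ↔ Pred k n s t M C := by
  rw [ConfSet, Finset.mem_filter]
  constructor
  · exact fun h => h.2
  · intro h
    refine ⟨?_, h⟩
    rw [Finset.mem_powerset]
    intro p hp
    rw [Finset.mem_powerset]
    intro q hq
    have hsub := placement_sub_box hk (h.1.2.1 p hp) hq
    simp only [Finset.mem_product, Finset.mem_Icc] at hsub ⊢
    omega

lemma ncard_eq_card_ConfSet (hk : 1 ≤ k) {M : ℕ} (hMm : M ≤ m) :
    {C : Cfg | Pred k n s t M C}.ncard = (ConfSet k n s t m M).card := by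
  have h : {C : Cfg | Pred k n s t M C} = ↑(ConfSet k n s t m M) := by
    ext C
    simp only [Set.mem_setOf_eq, Finset.coe_filter, Finset.mem_coe]
    exact (mem_ConfSet hk hMm).symm
  rw [h, Set.ncard_coe_finset]

lemma mem_Obj {x : (_ : Finset ℕ) × Cfg} :
    x ∈ Obj k n s t j m ↔ x.1 ⊆ Finset.range (j + 1) ∧
      x.2 ∈ ConfSet k n s t m (m - x.1.card) := by
  cases x with
  | mk T C =>
    rw [Obj, Finset.mem_sigma, Finset.mem_powerset]

lemma occRow_exists {C : Cfg} {a : ℕ} : OccRow C a ↔ ∃ p ∈ C, ∃ q ∈ p, q.2 = a := by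
  unfold OccRow
  constructor
  · rintro ⟨p, hp, hrow⟩
    obtain ⟨q, hq, hq2⟩ := mem_rowsOf.1 hrow
    exact ⟨p, hp, q, hq, hq2⟩
  · rintro ⟨p, hp, q, hq, hq2⟩
    exact ⟨p, hp, mem_rowsOf.2 ⟨q, hq, hq2⟩⟩

lemma mem_ActSet {T : Finset ℕ} {C : Cfg} {r : ℕ} :
    r ∈ ActSet k t m T C ↔ r ∈ cutRows C (t * k + 1) (m - T.card) ∧
      (idx C (t * k + 1) (m - T.card) r ∈ T ∨ ¬ OccRow C (r + 1)) :=
  Finset.mem_filter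

lemma rowMapUp_self {w : ℕ} : rowMapUp w w = w := by
  unfold rowMapUp
  rw [if_neg (lt_irrefl w)]

lemma rowMapDown_self {w : ℕ} : rowMapDown w w = w := by
  unfold rowMapDown
  rw [if_neg (by omega)]

/-- The up-branch: the new object, and that `invo` maps it back. -/
lemma invo_good (hk : 2 ≤ k) (hs : s = t + 2 + j) (hm : k * s + 1 ≤ m)
    {x : (_ : Finset ℕ) × Cfg} (hx : x ∈ Obj k n s t j m) :
    invo k t m x ∈ Obj k n s t j m ∧ invo k t m (invo k t m x) = x ∧
      ((invo k t m x).1.card = x.1.card + 1 ∨ x.1.card = (invo k t m x).1.card + 1) := by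
  classical
  have hk1 : 1 ≤ k := by omega
  obtain ⟨T, C⟩ := x
  rw [mem_Obj] at hx
  obtain ⟨hT, hCmem⟩ := hx
  simp only at hT hCmem
  set M := m - T.card with hM
  obtain ⟨hC, hanch, htopE⟩ := (mem_ConfSet hk1 (Nat.sub_le m T.card)).1 hCmem
  rw [← hM] at hC htopE
  have htop : OccRow C M := occRow_exists.2 htopE
  have hTcard : T.card ≤ j + 1 := by
    have := Finset.card_le_card hT
    simpa using this
  have h2s : 2 * s ≤ k * s := Nat.mul_le_mul_right s hk
  have hjm : j + 2 ≤ m := by omega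
  have hMm : M + T.card = m := by omega
  -- the active set is nonempty
  have hne : (ActSet k t m T C).Nonempty := by
    unfold ActSet
    rw [← hM]
    exact active_nonempty hk hC hanch htop hT hMm hm hs
  set w := (ActSet k t m T C).min' hne with hwdef
  have hwmem : w ∈ ActSet k t m T C := Finset.min'_mem _ _
  have hwcut : w ∈ cutRows C (t * k + 1) M := by
    have := (mem_ActSet.1 hwmem).1
    rwa [← hM] at this
  have hwact : idx C (t * k + 1) M w ∈ T ∨ ¬ OccRow C (w + 1) := by
    have := (mem_ActSet.1 hwmem).2
    rwa [← hM] at this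
  set ℓ := idx C (t * k + 1) M w with hℓdef
  have hℓj : ℓ < j + 1 := by
    have h1 := idx_lt_of_mem hwcut
    have hq_le := cut_card_le_upper (n := n) (t := t) hk1 hC htop
    have hu := upper_card_bound (n := n) (M := M) hk1 hC hanch
    omega
  -- basic bounds on w
  have hwL : t * k + 1 ≤ w := (mem_cutRows.1 hwcut).1.1
  have hwM : w < M := (mem_cutRows.1 hwcut).1.2
  have hw0 : 1 ≤ w := by omega
  -- unfolding of invo at ⟨T, C⟩
  have hinvo : invo k t m ⟨T, C⟩ =
      if ℓ ∈ T then (⟨T.erase ℓ, shiftUp w C⟩ : (_ : Finset ℕ) × Cfg)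
      else ⟨insert ℓ T, shiftDown w C⟩ := by
    unfold invo
    rw [dif_pos hne]
  by_cases hℓT : ℓ ∈ T
  · -- up branch
    rw [hinvo, if_pos hℓT]
    have hTpos : 1 ≤ T.card := Finset.card_pos.2 ⟨ℓ, hℓT⟩
    have hT'card : (T.erase ℓ).card = T.card - 1 := Finset.card_erase_of_mem hℓT
    have hM' : m - (T.erase ℓ).card = M + 1 := by omega
    have hC' := shiftUp_config (t := t) hk1 hC hwcut
    have hanch' := shiftUp_anch hk1 hC hwcut hanch
    have htop' := shiftUp_top hwcut htop
    have hPred' : Pred k n s t (M + 1) (shiftUp w C) :=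
      ⟨hC', hanch', occRow_exists.1 htop'⟩
    have hmemObj' : (⟨T.erase ℓ, shiftUp w C⟩ : (_ : Finset ℕ) × Cfg) ∈ Obj k n s t j m := by
      rw [mem_Obj]
      refine ⟨(Finset.erase_subset _ _).trans hT, ?_⟩
      show shiftUp w C ∈ ConfSet k n s t m (m - (T.erase ℓ).card)
      rw [mem_ConfSet hk1 (Nat.sub_le _ _), hM']
      exact hPred'
    refine ⟨hmemObj', ?_, ?_⟩
    · -- invo maps the new object back
      -- analyse the active set of the new object
      have hcuts' := shiftUp_cuts (t := t) hk1 hC hwcut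
      have hwcut' : w ∈ cutRows (shiftUp w C) (t * k + 1) (M + 1) := by
        rw [hcuts']
        have himg : rowMapUp w w ∈ (cutRows C (t * k + 1) M).image (rowMapUp w) :=
          Finset.mem_image_of_mem _ hwcut
        rwa [rowMapUp_self] at himg
      have hnocc' : ¬ OccRow (shiftUp w C) (w + 1) := by
        rw [shiftUp_occ]
        rintro ⟨b, hb, -⟩
        unfold rowMapUp at hb
        split_ifs at hb <;> omega
      have hidxw' : idx (shiftUp w C) (t * k + 1) (M + 1) w = ℓ := by
        have := shiftUp_idx (t := t) hk1 hC hwcut hwcut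
        rwa [rowMapUp_self] at this
      have hwmem' : w ∈ ActSet k t m (T.erase ℓ) (shiftUp w C) := by
        rw [mem_ActSet, hM']
        exact ⟨hwcut', Or.inr hnocc'⟩
      have hne' : (ActSet k t m (T.erase ℓ) (shiftUp w C)).Nonempty := ⟨w, hwmem'⟩
      have hmin' : ∀ a ∈ ActSet k t m (T.erase ℓ) (shiftUp w C), w ≤ a := by
        intro a ha
        by_contra haw
        push_neg at haw
        rw [mem_ActSet, hM'] at ha
        obtain ⟨hacut, hact⟩ := ha
        rw [hcuts', Finset.mem_image] at hacut
        obtain ⟨r, hr, hra⟩ := hacut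
        have hrle : r ≤ a := hra ▸ rowMapUp_le
        have hrw : r < w := by omega
        have hid : rowMapUp w r = r := by unfold rowMapUp; rw [if_neg (by omega)]
        have hra' : a = r := by omega
        subst hra'
        have hractive : a ∈ ActSet k t m T C := by
          rw [mem_ActSet, ← hM]
          refine ⟨hr, ?_⟩
          rcases hact with hidx | hocc
          · left
            have := shiftUp_idx (t := t) hk1 hC hwcut hr
            rw [hid] at this
            rw [this] at hidx
            exact Finset.mem_of_mem_erase hidx
          · right
            intro hocc1
            apply hocc
            rw [shiftUp_occ]
            refine ⟨a + 1, ?_, hocc1⟩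
            unfold rowMapUp
            rw [if_neg (by omega)]
        have := Finset.min'_le _ _ hractive
        rw [← hwdef] at this
        omega
      have hw'eq : (ActSet k t m (T.erase ℓ) (shiftUp w C)).min' hne' = w :=
        le_antisymm (Finset.min'_le _ _ hwmem') (Finset.le_min' _ _ _ hmin')
      -- compute invo on the new object
      unfold invo
      rw [dif_pos hne']
      have hidx'' : idx (shiftUp w C) (t * k + 1) (m - (T.erase ℓ).card)
          ((ActSet k t m (T.erase ℓ) (shiftUp w C)).min' hne') = ℓ := by
        rw [hw'eq, hM', hidxw']
      rw [hidx'', if_neg (Finset.notMem_erase _ _), hw'eq]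
      show (⟨insert ℓ (T.erase ℓ), shiftDown w (shiftUp w C)⟩ : (_ : Finset ℕ) × Cfg) = _
      rw [Finset.insert_erase hℓT, shiftDown_shiftUp]
    · right
      show T.card = (T.erase ℓ).card + 1
      omega
  · -- down branch
    rw [hinvo, if_neg hℓT]
    have hnocc : ¬ OccRow C (w + 1) := by
      rcases hwact with h | h
      · exact absurd h hℓT
      · exact h
    have hwM2 : w + 2 ≤ M := by
      rcases Nat.lt_or_ge (w + 1) M with h | h
      · omega
      · have : M = w + 1 := by omega
        exact absurd (this ▸ htop) hnocc
    have hT''card : (insert ℓ T).card = T.card + 1 := Finset.card_insert_of_notMem hℓT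
    have hM'' : m - (insert ℓ T).card = M - 1 := by omega
    have hC'' := shiftDown_config (t := t) hk1 hC hwcut hnocc htop hw0
    have hanch'' := shiftDown_anch hk1 hC hwcut hnocc hanch
    have htop'' := shiftDown_top hwcut hnocc htop
    have hPred'' : Pred k n s t (M - 1) (shiftDown w C) :=
      ⟨hC'', hanch'', occRow_exists.1 htop''⟩
    have hmemObj'' : (⟨insert ℓ T, shiftDown w C⟩ : (_ : Finset ℕ) × Cfg) ∈ Obj k n s t j m := by
      rw [mem_Obj]
      refine ⟨Finset.insert_subset (Finset.mem_range.2 hℓj) hT, ?_⟩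
      show shiftDown w C ∈ ConfSet k n s t m (m - (insert ℓ T).card)
      rw [mem_ConfSet hk1 (Nat.sub_le _ _), hM'']
      exact hPred''
    refine ⟨hmemObj'', ?_, ?_⟩
    · -- invo maps the new object back
      have hcuts'' := shiftDown_cuts (t := t) hk1 hC hwcut hnocc htop
      have hwcut'' : w ∈ cutRows (shiftDown w C) (t * k + 1) (M - 1) := by
        rw [hcuts'']
        have himg : rowMapDown w w ∈ (cutRows C (t * k + 1) M).image (rowMapDown w) :=
          Finset.mem_image_of_mem _ hwcut
        rwa [rowMapDown_self] at himg
      have hidxw'' : idx (shiftDown w C) (t * k + 1) (M - 1) w = ℓ := by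
        have := shiftDown_idx (t := t) hk1 hC hwcut hnocc htop hwcut
        rwa [rowMapDown_self] at this
      have hwmem'' : w ∈ ActSet k t m (insert ℓ T) (shiftDown w C) := by
        rw [mem_ActSet, hM'']
        exact ⟨hwcut'', Or.inl (by rw [hidxw'']; exact Finset.mem_insert_self _ _)⟩
      have hne'' : (ActSet k t m (insert ℓ T) (shiftDown w C)).Nonempty := ⟨w, hwmem''⟩
      have hmin'' : ∀ a ∈ ActSet k t m (insert ℓ T) (shiftDown w C), w ≤ a := by
        intro a ha
        by_contra haw
        push_neg at haw
        rw [mem_ActSet, hM''] at ha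
        obtain ⟨hacut, hact⟩ := ha
        rw [hcuts'', Finset.mem_image] at hacut
        obtain ⟨r, hr, hra⟩ := hacut
        have hrocc : OccRow C r := (mem_cutRows.1 hr).2.1
        have hrne : r ≠ w + 1 := by rintro rfl; exact hnocc hrocc
        have hrw : r < w := by
          unfold rowMapDown at hra
          split_ifs at hra <;> omega
        have hid : rowMapDown w r = r := by unfold rowMapDown; rw [if_neg (by omega)]
        have hra' : a = r := by omega
        subst hra'
        have hractive : a ∈ ActSet k t m T C := by
          rw [mem_ActSet, ← hM]
          refine ⟨hr, ?_⟩
          rcases hact with hidx | hocc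
          · left
            have heq := shiftDown_idx (t := t) hk1 hC hwcut hnocc htop hr
            rw [hid] at heq
            rw [heq] at hidx
            rcases Finset.mem_insert.1 hidx with h | h
            · exfalso
              have := idx_injOn (Finset.mem_coe.2 hr) (Finset.mem_coe.2 hwcut) (h.trans hℓdef)
              omega
            · exact h
          · right
            intro hocc1
            apply hocc
            rw [shiftDown_occ]
            refine ⟨a + 1, ?_, hocc1⟩
            unfold rowMapDown
            rw [if_neg (by omega)]
        have := Finset.min'_le _ _ hractive
        rw [← hwdef] at this
        omega
      have hw''eq : (ActSet k t m (insert ℓ T) (shiftDown w C)).min' hne'' = w :=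
        le_antisymm (Finset.min'_le _ _ hwmem'') (Finset.le_min' _ _ _ hmin'')
      unfold invo
      rw [dif_pos hne'']
      have hidx''' : idx (shiftDown w C) (t * k + 1) (m - (insert ℓ T).card)
          ((ActSet k t m (insert ℓ T) (shiftDown w C)).min' hne'') = ℓ := by
        rw [hw''eq, hM'', hidxw'']
      rw [hidx''', if_pos (Finset.mem_insert_self _ _), hw''eq]
      show (⟨(insert ℓ T).erase ℓ, shiftUp w (shiftDown w C)⟩ : (_ : Finset ℕ) × Cfg) = _
      rw [Finset.erase_insert hℓT, shiftUp_shiftDown hnocc]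
    · left
      show (insert ℓ T).card = T.card + 1
      exact hT''card

end Assembly

end KmerSharp

/-- Lemma on `j` unrestricted `k`-mers, with top restriction: for `s = t + 2 + j`
and `m ≥ k s + 1`, `∑_{i=0}^{j+1} (-1)^i C(j+1,i) A(m-i) = 0`, where `A(m')` counts
configurations of `s` `k`-mers on the `n × m'` lattice with rows `j'k+1`
(`0 ≤ j' ≤ t`) bottom-anchored and some placement occupying a site in row `m'`. -/
theorem j_unrestricted_with_top (k n s : ℕ) (hk : 2 ≤ k) (hn : 1 ≤ n) (hs1 : 1 ≤ s)
    (t j : ℕ) (hs : s = t + 2 + j) (m : ℕ) (hm : k * s + 1 ≤ m) :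
    ∑ i ∈ Finset.range (j + 2),
        (-1 : ℤ) ^ i * ((j + 1).choose i : ℤ) *
          ({C | IsFreeConfig k n (m - i) s C ∧
              (∀ j' ≤ t, BottomAnchored C (j' * k + 1)) ∧
              ∃ p ∈ C, ∃ q ∈ p, q.2 = m - i}.ncard : ℤ) = 0 := by
  classical
  have hk1 : 1 ≤ k := by omega
  -- rewrite each summand via `ConfSet`
  have hstep1 : ∀ i ∈ Finset.range (j + 2),
      (-1 : ℤ) ^ i * ((j + 1).choose i : ℤ) *
          ({C | IsFreeConfig k n (m - i) s C ∧
              (∀ j' ≤ t, BottomAnchored C (j' * k + 1)) ∧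
              ∃ p ∈ C, ∃ q ∈ p, q.2 = m - i}.ncard : ℤ)
        = ((j + 1).choose i : ℤ) * ((-1 : ℤ) ^ i *
            ((KmerSharp.ConfSet k n s t m (m - i)).card : ℤ)) := by
    intro i _
    have h1 : {C | IsFreeConfig k n (m - i) s C ∧
              (∀ j' ≤ t, BottomAnchored C (j' * k + 1)) ∧
              ∃ p ∈ C, ∃ q ∈ p, q.2 = m - i} = {C | KmerSharp.Pred k n s t (m - i) C} := rfl
    rw [h1, KmerSharp.ncard_eq_card_ConfSet hk1 (Nat.sub_le m i)]
    ring
  rw [Finset.sum_congr rfl hstep1]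
  -- regroup the sum over subsets T of range (j+1)
  have hstep2 : ∑ i ∈ Finset.range (j + 2), ((j + 1).choose i : ℤ) * ((-1 : ℤ) ^ i *
      ((KmerSharp.ConfSet k n s t m (m - i)).card : ℤ))
      = ∑ T ∈ (Finset.range (j + 1)).powerset, ((-1 : ℤ) ^ T.card *
          ((KmerSharp.ConfSet k n s t m (m - T.card)).card : ℤ)) := by
    rw [Finset.sum_powerset_apply_card
      (fun i => ((-1 : ℤ) ^ i * ((KmerSharp.ConfSet k n s t m (m - i)).card : ℤ)))]
    simp only [Finset.card_range, nsmul_eq_mul]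
  rw [hstep2]
  -- expand each ConfSet card as a sum over its elements
  have hstep3 : ∑ T ∈ (Finset.range (j + 1)).powerset, ((-1 : ℤ) ^ T.card *
      ((KmerSharp.ConfSet k n s t m (m - T.card)).card : ℤ))
      = ∑ x ∈ KmerSharp.Obj k n s t j m, (-1 : ℤ) ^ x.1.card := by
    rw [KmerSharp.Obj, Finset.sum_sigma]
    apply Finset.sum_congr rfl
    intro T _
    show _ = ∑ _C ∈ KmerSharp.ConfSet k n s t m (m - T.card), (-1 : ℤ) ^ T.card
    rw [Finset.sum_const, nsmul_eq_mul]
    ring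
  rw [hstep3]
  -- the sign-reversing involution kills everything
  apply Finset.sum_involution (fun x _ => KmerSharp.invo k t m x)
  · intro x hx
    obtain ⟨-, -, hcard⟩ := KmerSharp.invo_good hk hs hm hx
    rcases hcard with h | h <;> rw [h] <;> ring
  · intro x hx h
    obtain ⟨-, -, hcard⟩ := KmerSharp.invo_good hk hs hm hx
    intro heq
    rw [heq] at hcard
    omega
  · intro x hx
    exact (KmerSharp.invo_good hk hs hm hx).1
  · intro x hx
    exact (KmerSharp.invo_good hk hs hm hx).2.1
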